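/- Let 1/2 < a ≤ 1 and s ≥ 1. Then ∫₀^{π/2} ( (2z)/(π·sin z) )^{2(1−a)} · ( s^{2a−1}·z^{2a−2}·e^{−s z} / Γ(2a−1) ) dz ≥ (2/π)·( 1 − 2(2a−1)/(s·π) ), where Γ is the real Gamma function. (The integrand is the Gamma(2a−1, rate s) density multiplied by the acceptance function, and the right-hand side is nonnegative since 2a−1 ≤ 1 and s ≥ 1.) -/

import Mathlib

open Real MeasureTheory

lemma stmt14_aux_int (c s : ℝ) (hc : -1 < c) (hs : 0 < s) :
    IntegrableOn (fun z : ℝ ↦ z ^ c * Real.exp (-(s * z))) (Set.Ioi 0) := by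
  have h := integrableOn_rpow_mul_exp_neg_mul_rpow hc (p := 1) one_pos hs
  refine h.congr_fun (fun x _ ↦ ?_) measurableSet_Ioi
  simp only [Real.rpow_one, neg_mul]

/-- for `1/2 < a ≤ 1` and `s ≥ 1`, the acceptance probability of
the gamma-rejection algorithm is at least `(2/π)·(1 − 2(2a−1)/(sπ))`:
`∫₀^{π/2} ((2z)/(π·sin z))^{2(1−a)} · (s^{2a−1}·z^{2a−2}·e^{−sz}/Γ(2a−1)) dz
  ≥ (2/π)·(1 − 2(2a−1)/(sπ))`. -/
theorem stmt14 (a s : ℝ) (ha1 : 1 / 2 < a) (ha2 : a ≤ 1) (hs : 1 ≤ s) :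
    (2 / π) * (1 - 2 * (2 * a - 1) / (s * π)) ≤
      ∫ z in Set.Ioo (0 : ℝ) (π / 2),
        ((2 * z) / (π * Real.sin z)) ^ (2 * (1 - a)) *
          (s ^ (2 * a - 1) * z ^ (2 * a - 2) * Real.exp (-(s * z)) /
            Real.Gamma (2 * a - 1)) := by
  have hπ : 0 < π := Real.pi_pos
  have hπ2 : 0 < π / 2 := by linarith
  have hs0 : 0 < s := lt_of_lt_of_le one_pos hs
  set b : ℝ := 2 * a - 1 with hb_def
  have hb0 : 0 < b := by rw [hb_def]; linarith
  have hb1 : b ≤ 1 := by rw [hb_def]; linarith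
  have hΓ : 0 < Real.Gamma b := Real.Gamma_pos_of_pos hb0
  rw [show (2 * a - 2 : ℝ) = b - 1 by rw [hb_def]; ring]
  set p : ℝ := 2 * (1 - a) with hp_def
  have hp0 : 0 ≤ p := by rw [hp_def]; linarith
  have hp1 : p ≤ 1 := by rw [hp_def]; linarith
  set f : ℝ → ℝ := fun z ↦ s ^ b * z ^ (b - 1) * Real.exp (-(s * z)) / Real.Gamma b
    with hf_def
  have hf_eq : f = fun z ↦ (s ^ b / Real.Gamma b) * (z ^ (b - 1) * Real.exp (-(s * z))) := by
    funext z; rw [hf_def]; ring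
  have hss : s ^ b * (1 / s) ^ b = 1 := by
    rw [← Real.mul_rpow hs0.le (by positivity), mul_one_div, div_self hs0.ne', Real.one_rpow]
  -- integrability of f on Ioi 0
  have hf_int : IntegrableOn f (Set.Ioi 0) := by
    rw [hf_eq]
    exact (stmt14_aux_int (b - 1) s (by linarith) hs0).const_mul _
  have hf_total : ∫ z in Set.Ioi 0, f z = 1 := by
    rw [hf_eq, MeasureTheory.integral_const_mul,
      Real.integral_rpow_mul_exp_neg_mul_Ioi hb0 hs0]
    field_simp
    linear_combination hss
  -- the auxiliary function g
  set g : ℝ → ℝ := fun z ↦ (2 / π) * (s ^ b / Real.Gamma b) * (z ^ b * Real.exp (-(s * z)))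
    with hg_def
  have hg_int : IntegrableOn g (Set.Ioi 0) :=
    (stmt14_aux_int b s (by linarith) hs0).const_mul _
  have hg_total : ∫ z in Set.Ioi 0, g z = 2 * b / (s * π) := by
    rw [hg_def, MeasureTheory.integral_const_mul]
    have h1 : ∫ z in Set.Ioi 0, z ^ b * Real.exp (-(s * z)) = (1 / s) ^ (b + 1)
        * Real.Gamma (b + 1) := by
      have := Real.integral_rpow_mul_exp_neg_mul_Ioi (show (0:ℝ) < b + 1 by linarith) hs0
      simpa using this
    rw [h1, Real.Gamma_add_one hb0.ne',
      Real.rpow_add (by positivity : (0:ℝ) < 1 / s), Real.rpow_one]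
    field_simp
    linear_combination hss
  -- splitting the integral
  have hIoo_int : IntegrableOn f (Set.Ioo 0 (π / 2)) :=
    hf_int.mono_set Set.Ioo_subset_Ioi_self
  have hIci_sub : Set.Ici (π / 2) ⊆ Set.Ioi (0:ℝ) := fun x hx ↦ lt_of_lt_of_le hπ2 hx
  have hIci_int : IntegrableOn f (Set.Ici (π / 2)) := hf_int.mono_set hIci_sub
  have hdisj : Disjoint (Set.Ioo (0:ℝ) (π / 2)) (Set.Ici (π / 2)) := by
    apply Set.disjoint_left.mpr
    rintro x ⟨_, h2⟩ h3
    exact absurd h3 (not_le.mpr h2)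
  have hsplit : (∫ z in Set.Ioo 0 (π / 2), f z) + ∫ z in Set.Ici (π / 2), f z = 1 := by
    rw [← MeasureTheory.setIntegral_union hdisj measurableSet_Ici hIoo_int hIci_int,
      Set.Ioo_union_Ici_eq_Ioi hπ2, hf_total]
  -- tail bound
  have htail : ∫ z in Set.Ici (π / 2), f z ≤ 2 * b / (s * π) := by
    have step1 : ∫ z in Set.Ici (π / 2), f z ≤ ∫ z in Set.Ici (π / 2), g z := by
      refine setIntegral_mono_on hIci_int (hg_int.mono_set hIci_sub)
        measurableSet_Ici (fun z hz ↦ ?_)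
      have hz0 : 0 < z := hIci_sub hz
      have h1 : z ^ (b - 1) = z ^ b / z := by rw [Real.rpow_sub hz0, Real.rpow_one]
      have hzb : 0 < z ^ b := Real.rpow_pos_of_pos hz0 b
      have h2 : z ^ b / z ≤ (2 / π) * z ^ b := by
        rw [div_le_iff₀ hz0]
        have : 1 ≤ (2 / π) * z := by
          rw [Set.mem_Ici] at hz
          rw [div_mul_eq_mul_div, le_div_iff₀ hπ]
          linarith
        nlinarith
      have hC : (0:ℝ) ≤ s ^ b * Real.exp (-(s * z)) / Real.Gamma b := by positivity
      calc f z = (s ^ b * Real.exp (-(s * z)) / Real.Gamma b) * (z ^ b / z) := by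
              simp only [hf_def]; rw [h1]; ring
        _ ≤ (s ^ b * Real.exp (-(s * z)) / Real.Gamma b) * ((2 / π) * z ^ b) :=
              mul_le_mul_of_nonneg_left h2 hC
        _ = g z := by simp only [hg_def]; ring
    have step2 : ∫ z in Set.Ici (π / 2), g z ≤ ∫ z in Set.Ioi 0, g z := by
      refine setIntegral_mono_set hg_int ?_ (Filter.Eventually.of_forall hIci_sub)
      rw [Filter.EventuallyLE, ae_restrict_iff' measurableSet_Ioi]
      filter_upwards with z hz
      have hz0 : 0 < z := hz
      rw [hg_def]
      positivity
    rw [← hg_total]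
    exact step1.trans step2
  have hmain : 1 - 2 * b / (s * π) ≤ ∫ z in Set.Ioo 0 (π / 2), f z := by linarith
  -- pointwise comparison on Ioo
  have hpoint : ∀ z ∈ Set.Ioo (0:ℝ) (π / 2),
      2 / π ≤ ((2 * z) / (π * Real.sin z)) ^ p ∧ ((2 * z) / (π * Real.sin z)) ^ p ≤ 1 := by
    rintro z ⟨hz0, hz2⟩
    have hsin : 0 < Real.sin z := Real.sin_pos_of_pos_of_lt_pi hz0 (by linarith)
    have hsinle : Real.sin z ≤ z := Real.sin_le hz0.le
    have hjordan : 2 / π * z ≤ Real.sin z := Real.mul_le_sin hz0.le hz2.le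
    have hbpos : 0 < (2 * z) / (π * Real.sin z) := by positivity
    have hbge : 2 / π ≤ (2 * z) / (π * Real.sin z) := by
      rw [div_le_div_iff₀ hπ (by positivity)]
      nlinarith
    have hble : (2 * z) / (π * Real.sin z) ≤ 1 := by
      rw [div_le_one (by positivity)]
      have hmul : π * (2 / π * z) = 2 * z := by field_simp
      nlinarith [mul_le_mul_of_nonneg_left hjordan hπ.le]
    constructor
    · calc 2 / π = (2 / π) ^ (1:ℝ) := (Real.rpow_one _).symm
        _ ≤ (2 / π) ^ p := Real.rpow_le_rpow_of_exponent_ge (by positivity)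
            (by rw [div_le_one hπ]; exact Real.two_le_pi) hp1
        _ ≤ ((2 * z) / (π * Real.sin z)) ^ p := Real.rpow_le_rpow (by positivity) hbge hp0
    · exact Real.rpow_le_one hbpos.le hble hp0
  -- integrability of the full integrand
  have hH_meas : AEStronglyMeasurable
      (fun z ↦ ((2 * z) / (π * Real.sin z)) ^ p * f z)
      (volume.restrict (Set.Ioo (0:ℝ) (π / 2))) := by
    apply Measurable.aestronglyMeasurable
    rw [hf_def]
    fun_prop
  have hf_nonneg : ∀ z ∈ Set.Ioo (0:ℝ) (π/2), 0 ≤ f z := by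
    rintro z ⟨hz0, _⟩
    rw [hf_def]
    positivity
  have hH_int : IntegrableOn (fun z ↦ ((2 * z) / (π * Real.sin z)) ^ p * f z)
      (Set.Ioo 0 (π / 2)) := by
    refine MeasureTheory.Integrable.mono hIoo_int hH_meas ?_
    rw [ae_restrict_iff' measurableSet_Ioo]
    filter_upwards with z hz
    have h1 := (hpoint z hz).2
    have h2 : 0 ≤ ((2 * z) / (π * Real.sin z)) ^ p := by
      have hsin : 0 < Real.sin z := Real.sin_pos_of_pos_of_lt_pi hz.1 (by linarith [hz.2])
      have hz0 : 0 < z := hz.1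
      positivity
    have h3 := hf_nonneg z hz
    rw [Real.norm_eq_abs, Real.norm_eq_abs, abs_of_nonneg (mul_nonneg h2 h3),
      abs_of_nonneg h3]
    nlinarith
  -- conclude
  calc (2 / π) * (1 - 2 * b / (s * π))
      ≤ (2 / π) * ∫ z in Set.Ioo 0 (π / 2), f z :=
        mul_le_mul_of_nonneg_left hmain (by positivity)
    _ = ∫ z in Set.Ioo 0 (π / 2), (2 / π) * f z :=
        (MeasureTheory.integral_const_mul _ _).symm
    _ ≤ ∫ z in Set.Ioo 0 (π / 2), ((2 * z) / (π * Real.sin z)) ^ p * f z := by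
        refine setIntegral_mono_on (hIoo_int.const_mul _) hH_int
          measurableSet_Ioo (fun z hz ↦ ?_)
        exact mul_le_mul_of_nonneg_right (hpoint z hz).1 (hf_nonneg z hz)
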